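/- Let R be a maximal rook placement in a region P. Then the set of strips of P containing an element of R is a strip cover of P of size at most 2·|R|; moreover, since every strip of P contains at most one element of R, one has |R| ≤ s ≤ 2·|R|, where s is the minimum size of a strip cover of P. -/
import Mathlib


/-- A pixel is a point of `ℤ × ℤ`. -/
abbrev Pixel : Type := ℤ × ℤ

/-- Two pixels are adjacent if their ℓ¹-distance is 1. -/
def Adjacent (p q : Pixel) : Prop := |p.1 - q.1| + |p.2 - q.2| = 1

/-- A cycle: a cyclic sequence of `k ≥ 2` pixels (encoded as a `k`-periodic
function on `ℤ`) in which consecutive pixels are adjacent. -/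
structure GridCycle where
  k : ℕ
  two_le : 2 ≤ k
  pts : ℤ → Pixel
  periodic : ∀ i : ℤ, pts (i + k) = pts i
  adj : ∀ i : ℤ, Adjacent (pts i) (pts (i + 1))

/-- The set of pixels covered by a cycle. -/
def GridCycle.covers (C : GridCycle) : Set Pixel := Set.range C.pts

/-- Turn cost at position `i`: 0 if the walk goes straight, 2 for a U-turn,
1 for a 90° turn. -/
def GridCycle.turnCost (C : GridCycle) (i : ℤ) : ℕ :=
  if C.pts (i + 1) - C.pts i = C.pts i - C.pts (i - 1) then 0
  else if C.pts (i + 1) - C.pts i = -(C.pts i - C.pts (i - 1)) then 2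
  else 1

/-- The number of turns of a cycle: total turn cost over all positions. -/
def GridCycle.turns (C : GridCycle) : ℕ :=
  ∑ i ∈ Finset.range C.k, C.turnCost (i : ℤ)

/-- A set of pixels is connected under adjacency. -/
def ConnectedIn (P : Set Pixel) : Prop :=
  ∀ p ∈ P, ∀ q ∈ P, Relation.ReflTransGen (fun a b => b ∈ P ∧ Adjacent a b) p q

/-- A region is a finite nonempty set of pixels connected under adjacency. -/
def IsRegion (P : Set Pixel) : Prop := P.Finite ∧ P.Nonempty ∧ ConnectedIn P

/-- A tour of `P`: a cycle whose pixels lie in `P` covering every pixel of `P`. -/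
def IsTour (P : Set Pixel) (C : GridCycle) : Prop := C.covers = P

/-- A cycle cover of `P`: a finite collection of cycles with pixels in `P`
covering every pixel of `P`. -/
def IsCycleCover (P : Set Pixel) (CC : List GridCycle) : Prop :=
  (∀ C ∈ CC, C.covers ⊆ P) ∧ ∀ p ∈ P, ∃ C ∈ CC, p ∈ C.covers

/-- The number of turns of a cycle cover. -/
def coverTurns (CC : List GridCycle) : ℕ := (CC.map GridCycle.turns).sum

/-- A horizontal strip of `P`: a maximal horizontal run of pixels of `P`. -/
def IsHStrip (P S : Set Pixel) : Prop :=
  ∃ x y : ℤ, ∃ ℓ : ℕ, S = {p : Pixel | p.2 = y ∧ x ≤ p.1 ∧ p.1 ≤ x + (ℓ : ℤ)} ∧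
    S ⊆ P ∧ (x - 1, y) ∉ P ∧ (x + (ℓ : ℤ) + 1, y) ∉ P

/-- A vertical strip of `P`: a maximal vertical run of pixels of `P`. -/
def IsVStrip (P S : Set Pixel) : Prop :=
  ∃ x y : ℤ, ∃ ℓ : ℕ, S = {p : Pixel | p.1 = x ∧ y ≤ p.2 ∧ p.2 ≤ y + (ℓ : ℤ)} ∧
    S ⊆ P ∧ (x, y - 1) ∉ P ∧ (x, y + (ℓ : ℤ) + 1) ∉ P

/-- A strip of `P` is a horizontal or vertical strip. -/
def IsStrip (P S : Set Pixel) : Prop := IsHStrip P S ∨ IsVStrip P S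

/-- A strip cover of `P`: a set of strips of `P` whose union is `P`. -/
def IsStripCover (P : Set Pixel) (F : Set (Set Pixel)) : Prop :=
  (∀ S ∈ F, IsStrip P S) ∧ ⋃₀ F = P

/-- The minimum size of a strip cover of `P`. -/
noncomputable def minStripCover (P : Set Pixel) : ℕ :=
  sInf {m | ∃ F, IsStripCover P F ∧ F.ncard = m}

/-- A rook placement in `P`: a subset of `P` no two distinct elements of which
lie in a common strip of `P`. -/
def IsRookPlacement (P R : Set Pixel) : Prop :=
  R ⊆ P ∧ ∀ p ∈ R, ∀ q ∈ R, p ≠ q → ¬∃ S, IsStrip P S ∧ p ∈ S ∧ q ∈ S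

/-- A maximal rook placement: every pixel of `P` lies in a common strip with
some element of `R`. -/
def IsMaximalRookPlacement (P R : Set Pixel) : Prop :=
  IsRookPlacement P R ∧ ∀ p ∈ P, ∃ r ∈ R, ∃ S, IsStrip P S ∧ p ∈ S ∧ r ∈ S

private lemma strip_sub {P S : Set Pixel} (h : IsStrip P S) : S ⊆ P := by
  rcases h with ⟨x,y,l,_,hsub,_,_⟩ | ⟨x,y,l,_,hsub,_,_⟩ <;> exact hsub

private lemma hstrip_unique {P S S' : Set Pixel} (h : IsHStrip P S) (h' : IsHStrip P S')
    {p : Pixel} (hp : p ∈ S) (hp' : p ∈ S') : S = S' := by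
  obtain ⟨x, y, l, hS, hsub, hl, hr⟩ := h
  obtain ⟨x', y', l', hS', hsub', hl', hr'⟩ := h'
  rw [hS] at hp; rw [hS'] at hp'
  obtain ⟨hy, hx1, hx2⟩ := hp
  obtain ⟨hy', hx1', hx2'⟩ := hp'
  have hyy : y = y' := by omega
  have hxx : x = x' := by
    by_contra hne
    rcases lt_or_gt_of_ne hne with hlt | hlt
    · exact hl' (hsub (by rw [hS]; exact ⟨hyy ▸ rfl, by omega, by omega⟩ : ((x' - 1 : ℤ), y') ∈ S))
    · exact hl (hsub' (by rw [hS']; exact ⟨hyy ▸ rfl, by omega, by omega⟩ : ((x - 1 : ℤ), y) ∈ S'))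
  have hee : x + (l : ℤ) = x' + (l' : ℤ) := by
    by_contra hne
    rcases lt_or_gt_of_ne hne with hlt | hlt
    · exact hr (hsub' (by rw [hS']; exact ⟨hyy ▸ rfl, by omega, by omega⟩ :
        ((x + (l : ℤ) + 1, y) : Pixel) ∈ S'))
    · exact hr' (hsub (by rw [hS]; exact ⟨hyy ▸ rfl, by omega, by omega⟩ :
        ((x' + (l' : ℤ) + 1, y') : Pixel) ∈ S))
  ext q
  rw [hS, hS']
  constructor <;> rintro ⟨h1, h2, h3⟩ <;> exact ⟨by omega, by omega, by omega⟩

private lemma vstrip_unique {P S S' : Set Pixel} (h : IsVStrip P S) (h' : IsVStrip P S')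
    {p : Pixel} (hp : p ∈ S) (hp' : p ∈ S') : S = S' := by
  obtain ⟨x, y, l, hS, hsub, hl, hr⟩ := h
  obtain ⟨x', y', l', hS', hsub', hl', hr'⟩ := h'
  rw [hS] at hp; rw [hS'] at hp'
  obtain ⟨hy, hx1, hx2⟩ := hp
  obtain ⟨hy', hx1', hx2'⟩ := hp'
  have hyy : x = x' := by omega
  have hxx : y = y' := by
    by_contra hne
    rcases lt_or_gt_of_ne hne with hlt | hlt
    · exact hl' (hsub (by rw [hS]; exact ⟨hyy ▸ rfl, by omega, by omega⟩ : ((x', y' - 1) : Pixel) ∈ S))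
    · exact hl (hsub' (by rw [hS']; exact ⟨hyy ▸ rfl, by omega, by omega⟩ : ((x, y - 1) : Pixel) ∈ S'))
  have hee : y + (l : ℤ) = y' + (l' : ℤ) := by
    by_contra hne
    rcases lt_or_gt_of_ne hne with hlt | hlt
    · exact hr (hsub' (by rw [hS']; exact ⟨hyy ▸ rfl, by omega, by omega⟩ :
        ((x, y + (l : ℤ) + 1) : Pixel) ∈ S'))
    · exact hr' (hsub (by rw [hS]; exact ⟨hyy ▸ rfl, by omega, by omega⟩ :
        ((x', y' + (l' : ℤ) + 1) : Pixel) ∈ S))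
  ext q
  rw [hS, hS']
  constructor <;> rintro ⟨h1, h2, h3⟩ <;> exact ⟨by omega, by omega, by omega⟩

/-- Star cover from a maximal rook placement: for a maximal rook placement `R`
in a region `P`, the set of strips of `P` containing an element of `R` is a
strip cover of `P` of size at most `2·|R|`; moreover every strip of `P`
contains at most one element of `R`, and `|R| ≤ s ≤ 2·|R|` where `s` is the
minimum size of a strip cover of `P`. -/

theorem maximalRook_star_cover (P : Set Pixel) (hP : IsRegion P)
    (R : Set Pixel) (hR : IsMaximalRookPlacement P R) :
    IsStripCover P {S | IsStrip P S ∧ ∃ r ∈ R, r ∈ S} ∧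
    {S | IsStrip P S ∧ ∃ r ∈ R, r ∈ S}.ncard ≤ 2 * R.ncard ∧
    (∀ S : Set Pixel, IsStrip P S → (R ∩ S).ncard ≤ 1) ∧
    R.ncard ≤ minStripCover P ∧ minStripCover P ≤ 2 * R.ncard := by
    classical
  obtain ⟨hPfin, hPne, hPconn⟩ := hP
  obtain ⟨⟨hRP, hrook⟩, hmax⟩ := hR
  set F : Set (Set Pixel) := {S | IsStrip P S ∧ ∃ r ∈ R, r ∈ S} with hF
  have hRfin : R.Finite := hPfin.subset hRP
  -- F is a strip cover
  have hcover : IsStripCover P F := by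
    constructor
    · exact fun S hS => hS.1
    · apply Set.Subset.antisymm
      · intro p hp
        obtain ⟨S, hS, hpS⟩ := hp
        exact strip_sub hS.1 hpS
      · intro p hp
        obtain ⟨r, hrR, S, hSstrip, hpS, hrS⟩ := hmax p hp
        exact ⟨S, ⟨hSstrip, r, hrR, hrS⟩, hpS⟩
  -- cardinality bound on F
  have hFcard : F.ncard ≤ 2 * R.ncard := by
    have hmap : Set.MapsTo (fun S : Set Pixel =>
        ((Classical.epsilon fun r : Pixel => r ∈ R ∧ r ∈ S,
          if IsHStrip P S then true else false) : Pixel × Bool)) F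
        (R ×ˢ (Set.univ : Set Bool)) := by
      intro S hS
      have hspec : (Classical.epsilon fun r : Pixel => r ∈ R ∧ r ∈ S) ∈ R ∧
          (Classical.epsilon fun r : Pixel => r ∈ R ∧ r ∈ S) ∈ S := by
        apply Classical.epsilon_spec (p := fun r : Pixel => r ∈ R ∧ r ∈ S)
        obtain ⟨r, hrR, hrS⟩ := hS.2
        exact ⟨r, hrR, hrS⟩
      exact ⟨hspec.1, trivial⟩
    have hinj : Set.InjOn (fun S : Set Pixel =>
        ((Classical.epsilon fun r : Pixel => r ∈ R ∧ r ∈ S,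
          if IsHStrip P S then true else false) : Pixel × Bool)) F := by
      intro S hS S' hS' heq
      have hspec : (Classical.epsilon fun r : Pixel => r ∈ R ∧ r ∈ S) ∈ R ∧
          (Classical.epsilon fun r : Pixel => r ∈ R ∧ r ∈ S) ∈ S := by
        apply Classical.epsilon_spec (p := fun r : Pixel => r ∈ R ∧ r ∈ S)
        obtain ⟨r, hrR, hrS⟩ := hS.2
        exact ⟨r, hrR, hrS⟩
      have hspec' : (Classical.epsilon fun r : Pixel => r ∈ R ∧ r ∈ S') ∈ R ∧
          (Classical.epsilon fun r : Pixel => r ∈ R ∧ r ∈ S') ∈ S' := by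
        apply Classical.epsilon_spec (p := fun r : Pixel => r ∈ R ∧ r ∈ S')
        obtain ⟨r, hrR, hrS⟩ := hS'.2
        exact ⟨r, hrR, hrS⟩
      have h1 : (Classical.epsilon fun r : Pixel => r ∈ R ∧ r ∈ S)
          = (Classical.epsilon fun r : Pixel => r ∈ R ∧ r ∈ S') :=
        congrArg Prod.fst heq
      have h2 : (if IsHStrip P S then true else false)
          = (if IsHStrip P S' then true else false) := congrArg Prod.snd heq
      have hpS : (Classical.epsilon fun r : Pixel => r ∈ R ∧ r ∈ S) ∈ S := hspec.2
      have hpS' : (Classical.epsilon fun r : Pixel => r ∈ R ∧ r ∈ S) ∈ S' := by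
        rw [h1]; exact hspec'.2
      by_cases hH : IsHStrip P S <;> by_cases hH' : IsHStrip P S'
      · exact hstrip_unique hH hH' hpS hpS'
      · simp [hH, hH'] at h2
      · simp [hH, hH'] at h2
      · have hV : IsVStrip P S := hS.1.resolve_left hH
        have hV' : IsVStrip P S' := hS'.1.resolve_left hH'
        exact vstrip_unique hV hV' hpS hpS'
    calc F.ncard ≤ (R ×ˢ (Set.univ : Set Bool)).ncard :=
          Set.ncard_le_ncard_of_injOn _ hmap hinj (hRfin.prod (Set.finite_univ))
      _ = R.ncard * 2 := by
          rw [← Nat.card_coe_set_eq, ← Nat.card_coe_set_eq,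
            Nat.card_congr (Equiv.Set.prod R Set.univ), Nat.card_prod]
          simp [Nat.card_eq_fintype_card]
      _ = 2 * R.ncard := by ring
  -- each strip contains at most one rook
  have hone : ∀ S : Set Pixel, IsStrip P S → (R ∩ S).ncard ≤ 1 := by
    intro S hS
    have hsub : (R ∩ S).Subsingleton := by
      intro a ha b hb
      by_contra hne
      exact hrook a ha.1 b hb.1 hne ⟨S, hS, ha.2, hb.2⟩
    rcases hsub.eq_empty_or_singleton with h | ⟨a, h⟩ <;> simp [h]
  -- lower bound: R.ncard ≤ any cover's size
  have hlow : ∀ m ∈ {m | ∃ G, IsStripCover P G ∧ G.ncard = m}, R.ncard ≤ m := by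
    rintro m ⟨G, hG, rfl⟩
    have hGfin : G.Finite := by
      apply Set.Finite.subset hPfin.finite_subsets
      intro S hS
      exact strip_sub (hG.1 S hS)
    have hmap : Set.MapsTo (fun r : Pixel =>
        Classical.epsilon fun S : Set Pixel => S ∈ G ∧ r ∈ S) R G := by
      intro r hr
      have : ∃ S : Set Pixel, S ∈ G ∧ r ∈ S := by
        have : r ∈ ⋃₀ G := hG.2 ▸ hRP hr
        obtain ⟨S, hS, hrS⟩ := this
        exact ⟨S, hS, hrS⟩
      exact (Classical.epsilon_spec this).1
    have hinj : Set.InjOn (fun r : Pixel =>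
        Classical.epsilon fun S : Set Pixel => S ∈ G ∧ r ∈ S) R := by
      intro r hr r' hr' heq
      have e1 : ∃ S : Set Pixel, S ∈ G ∧ r ∈ S := by
        have : r ∈ ⋃₀ G := hG.2 ▸ hRP hr
        obtain ⟨S, hS, hrS⟩ := this; exact ⟨S, hS, hrS⟩
      have e2 : ∃ S : Set Pixel, S ∈ G ∧ r' ∈ S := by
        have : r' ∈ ⋃₀ G := hG.2 ▸ hRP hr'
        obtain ⟨S, hS, hrS⟩ := this; exact ⟨S, hS, hrS⟩
      have s1 := Classical.epsilon_spec e1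
      have s2 := Classical.epsilon_spec e2
      by_contra hne
      have heq' : (Classical.epsilon fun S : Set Pixel => S ∈ G ∧ r ∈ S)
          = (Classical.epsilon fun S : Set Pixel => S ∈ G ∧ r' ∈ S) := heq
      exact hrook r hr r' hr' hne
        ⟨_, hG.1 _ s1.1, s1.2, by rw [heq']; exact s2.2⟩
    exact Set.ncard_le_ncard_of_injOn _ hmap hinj hGfin
  refine ⟨hcover, hFcard, hone, ?_, ?_⟩
  · exact le_csInf ⟨F.ncard, F, hcover, rfl⟩ hlow
  · exact le_trans (Nat.sInf_le ⟨F, hcover, rfl⟩) hFcard
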